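/- Let Q be a prime power with Q not divisible by 3, and k a nonnegative integer. The polynomial g(x) := x^{k(Q+1)+3} + 3x^{k(Q+1)+Q+2} - x^{k(Q+1)+3Q} permutes F_{Q^2} if and only if gcd(2k + 3, Q - 1) = 1. -/

import Mathlib

lemma stmt9_Dne {F : Type*} [Field F] {s : ℕ} {T : F} (h3 : (3:F) ≠ 0)
    (hsub : ∀ a b : F, (a - b)^(s+1) = a^(s+1) - b^(s+1))
    (hadd : ∀ a b : F, (a + b)^(s+1) = a^(s+1) + b^(s+1))
    (h3Q : (3:F)^(s+1) = 3)
    (hT : T^(s+2) = 1) : 1 + 3*T - T^3 ≠ 0 := by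
  intro h0
  have hT0 : T ≠ 0 := by
    intro h; rw [h, zero_pow (by omega : s+2 ≠ 0)] at hT; exact zero_ne_one hT
  have hTq : T^(s+1) * T = 1 := by rw [← pow_succ]; exact hT
  have h1 : 1 + 3*T^(s+1) - (T^(s+1))^3 = 0 := by
    have := congrArg (· ^ (s+1)) h0
    have e3 : (T^3)^(s+1) = (T^(s+1))^3 := by rw [← pow_mul, mul_comm, pow_mul]
    simpa [hsub, hadd, one_pow, mul_pow, h3Q, e3,
      zero_pow (Nat.succ_ne_zero s)] using this
  have h2 : T^3 + 3*T^2 - 1 = 0 := by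
    linear_combination T^3 * h1 + ((T^(s+1))^2*T^2 + T^(s+1)*T + 1 - 3*T^2) * hTq
  have h4 : 3*T*(T+1) = 0 := by linear_combination h0 + h2
  have hT1 : T = -1 := by
    rcases mul_eq_zero.mp h4 with h' | h'
    · rcases mul_eq_zero.mp h' with h'' | h''
      · exact absurd h'' h3
      · exact absurd h'' hT0
    · linear_combination h'
  rw [hT1] at h0
  norm_num at h0
lemma stmt9_core {F : Type*} [Field F] {s : ℕ} {ω X Y : F}
    (hω : ω^2 + ω + 1 = 0) (h3 : (3:F) ≠ 0)
    (hsub : ∀ a b : F, (a - b)^(s+1) = a^(s+1) - b^(s+1))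
    (hm : (s+1) % 3 = 1 ∨ (s+1) % 3 = 2)
    (hX : X^(s+2) = 1) (hY : Y^(s+2) = 1)
    (h : (X^3 + 3*X^2 - 1)*(1 + 3*Y - Y^3) = (Y^3 + 3*Y^2 - 1)*(1 + 3*X - X^3)) :
    X = Y := by
  have hω3 : ω^3 = 1 := by linear_combination (ω - 1) * hω
  have hωne1 : ω ≠ 1 := by
    intro h1; apply h3; rw [h1] at hω; linear_combination hω
  have hω0 : ω ≠ 0 := by
    intro h1; rw [h1] at hω; simpa using hω
  have hω21 : ω^2 ≠ 1 := by
    intro h1; apply h3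
    linear_combination (ω - 1) * h1 - (ω - 2) * hω
  have hωω2 : ω ≠ ω^2 := by
    intro h1
    have h2 : ω * (ω - 1) = 0 := by linear_combination -h1
    rcases mul_eq_zero.mp h2 with h' | h'
    · exact hω0 h'
    · exact hωne1 (by linear_combination h')
  have hωpow : ∀ n : ℕ, ω ^ n = ω ^ (n % 3) := by
    intro n
    conv_lhs => rw [← Nat.div_add_mod n 3]
    rw [pow_add, pow_mul, hω3, one_pow, one_mul]
  have hX0 : X ≠ 0 := by
    intro h'; rw [h', zero_pow (by omega : s+2 ≠ 0)] at hX; exact zero_ne_one hX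
  have hY0 : Y ≠ 0 := by
    intro h'; rw [h', zero_pow (by omega : s+2 ≠ 0)] at hY; exact zero_ne_one hY
  have hXX : X^(s+1) * X = 1 := by rw [← pow_succ]; exact hX
  have hYY : Y^(s+1) * Y = 1 := by rw [← pow_succ]; exact hY
  have hXY0 : X * Y ≠ 0 := mul_ne_zero hX0 hY0
  -- the cube identity
  have hc3 : ((X - ω)*(Y - ω^2))^3 = ((X - ω^2)*(Y - ω))^3 := by
    linear_combination (ω - ω^2) * h + (3*Y*ω - 6*Y*ω^2 + 3*Y*ω^3 + 3*Y*ω^4 - 6*Y*ω^5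
      + 3*Y*ω^6 + 3*Y^2*ω - 6*Y^2*ω^2 + 3*Y^2*ω^3 + 3*Y^2*ω^4 - 3*Y^2*ω^5 - Y^3*ω^3
      + Y^3*ω^4 - 3*X*ω + 6*X*ω^2 - 3*X*ω^3 - 3*X*ω^4 + 6*X*ω^5 - 3*X*ω^6 + 9*X*Y^2*ω
      - 18*X*Y^2*ω^2 + 9*X*Y^2*ω^3 + 3*X*Y^3*ω - 3*X*Y^3*ω^2 - 3*X^2*ω + 6*X^2*ω^2
      - 3*X^2*ω^3 - 3*X^2*ω^4 + 3*X^2*ω^5 - 9*X^2*Y*ω + 18*X^2*Y*ω^2 - 9*X^2*Y*ω^3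
      + X^3*ω^3 - X^3*ω^4 - 3*X^3*Y*ω + 3*X^3*Y*ω^2) * hω
  have hcube : (X - ω)*(Y - ω^2) = (X - ω^2)*(Y - ω)
      ∨ (X - ω)*(Y - ω^2) = ω * ((X - ω^2)*(Y - ω))
      ∨ (X - ω)*(Y - ω^2) = ω^2 * ((X - ω^2)*(Y - ω)) := by
    set u := (X - ω)*(Y - ω^2)
    set v := (X - ω^2)*(Y - ω)
    have hz : (u - v)*(u - ω*v)*(u - ω^2*v) = 0 := by
      linear_combination hc3 + (-(u^2*v) + ω*u*v^2 - (ω-1)*v^3) * hω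
    rcases mul_eq_zero.mp hz with h' | h'
    · rcases mul_eq_zero.mp h' with h'' | h''
      · exact Or.inl (sub_eq_zero.mp h'')
      · exact Or.inr (Or.inl (sub_eq_zero.mp h''))
    · exact Or.inr (Or.inr (sub_eq_zero.mp h'))
  -- case c = d gives X = Y directly
  have case_eq : (X - ω)*(Y - ω^2) = (X - ω^2)*(Y - ω) → X = Y := by
    intro hcd
    have h0 : (X - Y)*(ω - ω^2) = 0 := by linear_combination hcd
    rcases mul_eq_zero.mp h0 with h' | h'
    · exact sub_eq_zero.mp h'
    · exact absurd (sub_eq_zero.mp h') hωω2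
  rcases hm with hm1 | hm2
  · -- Q ≡ 1 mod 3 : ω^(s+1) = ω
    have hωq : ω^(s+1) = ω := by rw [hωpow, hm1, pow_one]
    have hω2q : (ω^2)^(s+1) = ω^2 := by
      rw [← pow_mul, hωpow, (by omega : (2*(s+1)) % 3 = 2)]
    have hA : ((X - ω)*(Y - ω^2))^(s+1) * (X*Y) = (X - ω^2)*(Y - ω) := by
      rw [mul_pow, hsub X ω, hsub Y (ω^2), hωq, hω2q]
      linear_combination (Y^(s+1)*Y - ω^2*Y) * hXX + (1 - ω*X) * hYY
        + (ω - 1)*(X*Y - 1) * hω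
    have hB : ((X - ω^2)*(Y - ω))^(s+1) * (X*Y) = (X - ω)*(Y - ω^2) := by
      rw [mul_pow, hsub X (ω^2), hsub Y ω, hωq, hω2q]
      linear_combination (Y^(s+1)*Y - ω*Y) * hXX + (1 - ω^2*X) * hYY
        + (ω - 1)*(X*Y - 1) * hω
    -- X = ω and Y = ω² impossible in this branch
    have hXω : X ≠ ω := by
      intro h'
      rw [h'] at hX
      rw [hωpow, (by omega : (s+2) % 3 = 2)] at hX
      exact hω21 hX
    have hYω2 : Y ≠ ω^2 := by
      intro h'
      rw [h'] at hY
      rw [← pow_mul, hωpow, (by omega : (2*(s+2)) % 3 = 1), pow_one] at hY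
      exact hωne1 hY
    rcases hcube with hcd | hcd | hcd
    · exact case_eq hcd
    · exfalso
      have hd : (X - ω^2)*(Y - ω) = ω * ((X - ω)*(Y - ω^2)) := by
        calc (X - ω^2)*(Y - ω) = ((X - ω)*(Y - ω^2))^(s+1) * (X*Y) := hA.symm
          _ = (ω * ((X - ω^2)*(Y - ω)))^(s+1) * (X*Y) := by rw [← hcd]
          _ = ω^(s+1) * (((X - ω^2)*(Y - ω))^(s+1) * (X*Y)) := by rw [mul_pow]; ring
          _ = ω * ((X - ω)*(Y - ω^2)) := by rw [hB, hωq]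
      -- combine: d = ω c = ω² d  ⟹ d (1-ω²) = 0
      have h5 : ((X - ω^2)*(Y - ω)) * (1 - ω^2) = 0 := by
        linear_combination hd + ω * hcd
      have hdz : (X - ω^2)*(Y - ω) = 0 := by
        rcases mul_eq_zero.mp h5 with h' | h'
        · exact h'
        · exact absurd (by linear_combination -h' : ω^2 = 1) hω21
      have hcz : (X - ω)*(Y - ω^2) = 0 := by rw [hcd, hdz, mul_zero]
      rcases mul_eq_zero.mp hcz with h' | h'
      · exact hXω (sub_eq_zero.mp h')
      · exact hYω2 (sub_eq_zero.mp h')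
    · exfalso
      have hd : (X - ω^2)*(Y - ω) = ω^2 * ((X - ω)*(Y - ω^2)) := by
        calc (X - ω^2)*(Y - ω) = ((X - ω)*(Y - ω^2))^(s+1) * (X*Y) := hA.symm
          _ = (ω^2 * ((X - ω^2)*(Y - ω)))^(s+1) * (X*Y) := by rw [← hcd]
          _ = (ω^2)^(s+1) * (((X - ω^2)*(Y - ω))^(s+1) * (X*Y)) := by rw [mul_pow]; ring
          _ = ω^2 * ((X - ω)*(Y - ω^2)) := by rw [hB, hω2q]
      -- d = ω² c = ω⁴ d = ω d ⟹ d(1-ω) = 0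
      have h5 : ((X - ω^2)*(Y - ω)) * (1 - ω) = 0 := by
        linear_combination hd + ω^2 * hcd
          + ((X - ω^2)*(Y - ω)) * (ω^2 - ω) * hω
      have hdz : (X - ω^2)*(Y - ω) = 0 := by
        rcases mul_eq_zero.mp h5 with h' | h'
        · exact h'
        · exact absurd (by linear_combination -h' : ω = 1) hωne1
      have hcz : (X - ω)*(Y - ω^2) = 0 := by rw [hcd, hdz, mul_zero]
      rcases mul_eq_zero.mp hcz with h' | h'
      · exact hXω (sub_eq_zero.mp h')
      · exact hYω2 (sub_eq_zero.mp h')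
  · -- Q ≡ 2 mod 3 : ω^(s+1) = ω²
    have hωq : ω^(s+1) = ω^2 := by rw [hωpow, hm2]
    have hω2q : (ω^2)^(s+1) = ω := by
      rw [← pow_mul, hωpow, (by omega : (2*(s+1)) % 3 = 1), pow_one]
    have hA : ((X - ω)*(Y - ω^2))^(s+1) * (X*Y) = (X - ω)*(Y - ω^2) := by
      rw [mul_pow, hsub X ω, hsub Y (ω^2), hωq, hω2q]
      linear_combination (Y^(s+1)*Y - ω*Y) * hXX + (1 - ω^2*X) * hYY
        + (ω - 1)*(X*Y - 1) * hω
    have hB : ((X - ω^2)*(Y - ω))^(s+1) * (X*Y) = (X - ω^2)*(Y - ω) := by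
      rw [mul_pow, hsub X (ω^2), hsub Y ω, hωq, hω2q]
      linear_combination (Y^(s+1)*Y - ω^2*Y) * hXX + (1 - ω*X) * hYY
        + (ω - 1)*(X*Y - 1) * hω
    -- in this branch, from c = ω^j d (j≠0) we derive c = d = 0 and then X = Y
    have finish0 : (X - ω)*(Y - ω^2) = 0 → (X - ω^2)*(Y - ω) = 0 → X = Y := by
      intro hcz hdz
      rcases mul_eq_zero.mp hcz with h' | h'
      · -- X = ω
        have hX' : X = ω := sub_eq_zero.mp h'
        rcases mul_eq_zero.mp hdz with h'' | h''
        · exact absurd (by rw [hX'] at h''; linear_combination h'' : ω = ω^2) hωω2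
        · rw [hX', sub_eq_zero.mp h'']
      · -- Y = ω²
        have hY' : Y = ω^2 := sub_eq_zero.mp h'
        rcases mul_eq_zero.mp hdz with h'' | h''
        · rw [hY', sub_eq_zero.mp h'']
        · exact absurd (by rw [hY'] at h''; linear_combination -h'' : ω = ω^2) hωω2
    rcases hcube with hcd | hcd | hcd
    · exact case_eq hcd
    · -- c = ω d; also c = c^{s+1}XY = ω^{s+1} d^{s+1} XY = ω² d
      have hc2 : (X - ω)*(Y - ω^2) = ω^2 * ((X - ω^2)*(Y - ω)) := by
        calc (X - ω)*(Y - ω^2) = ((X - ω)*(Y - ω^2))^(s+1) * (X*Y) := hA.symm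
          _ = (ω * ((X - ω^2)*(Y - ω)))^(s+1) * (X*Y) := by rw [← hcd]
          _ = ω^(s+1) * (((X - ω^2)*(Y - ω))^(s+1) * (X*Y)) := by rw [mul_pow]; ring
          _ = ω^2 * ((X - ω^2)*(Y - ω)) := by rw [hB, hωq]
      have h5 : ((X - ω^2)*(Y - ω)) * (ω - ω^2) = 0 := by
        linear_combination hc2 - hcd
      have hdz : (X - ω^2)*(Y - ω) = 0 := by
        rcases mul_eq_zero.mp h5 with h' | h'
        · exact h'
        · exact absurd (sub_eq_zero.mp h') hωω2
      have hcz : (X - ω)*(Y - ω^2) = 0 := by rw [hcd, hdz, mul_zero]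
      exact finish0 hcz hdz
    · have hc2 : (X - ω)*(Y - ω^2) = ω * ((X - ω^2)*(Y - ω)) := by
        calc (X - ω)*(Y - ω^2) = ((X - ω)*(Y - ω^2))^(s+1) * (X*Y) := hA.symm
          _ = (ω^2 * ((X - ω^2)*(Y - ω)))^(s+1) * (X*Y) := by rw [← hcd]
          _ = (ω^2)^(s+1) * (((X - ω^2)*(Y - ω))^(s+1) * (X*Y)) := by rw [mul_pow]; ring
          _ = ω * ((X - ω^2)*(Y - ω)) := by rw [hB, hω2q]
      have h5 : ((X - ω^2)*(Y - ω)) * (ω - ω^2) = 0 := by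
        linear_combination hcd - hc2
      have hdz : (X - ω^2)*(Y - ω) = 0 := by
        rcases mul_eq_zero.mp h5 with h' | h'
        · exact h'
        · exact absurd (sub_eq_zero.mp h') hωω2
      have hcz : (X - ω)*(Y - ω^2) = 0 := by rw [hcd, hdz, mul_zero]
      exact finish0 hcz hdz


theorem stmt_9 (p e Q : ℕ) (hp : p.Prime) (he : 0 < e) (hQ : Q = p ^ e)
    (h3 : ¬ (3 ∣ Q)) (k : ℕ)
    (F : Type*) [Field F] [Fintype F] (hF : Fintype.card F = Q ^ 2) :
    Function.Bijective (fun x : F => x ^ (k * (Q + 1) + 3) +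
        3 * x ^ (k * (Q + 1) + Q + 2) - x ^ (k * (Q + 1) + 3 * Q)) ↔
      Nat.gcd (2 * k + 3) (Q - 1) = 1 := by
  haveI : Fact p.Prime := ⟨hp⟩
  haveI : DecidableEq F := Classical.decEq F
  have hQ2 : 2 ≤ Q := by
    rw [hQ]; exact le_trans hp.two_le (Nat.le_self_pow he.ne' p)
  obtain ⟨s, rfl⟩ : ∃ s, Q = s + 1 := ⟨Q - 1, by omega⟩
  have hs1 : 1 ≤ s := by omega
  simp only [Nat.add_sub_cancel]
  -- characteristic
  haveI hring : CharP F (ringChar F) := ringChar.charP F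
  obtain ⟨n, hn, hcard⟩ := FiniteField.card F (ringChar F)
  have hpr : p = ringChar F := by
    refine (Nat.prime_dvd_prime_iff_eq hp hn).mp (hp.dvd_of_dvd_pow (n := (n:ℕ)) ?_)
    rw [← hcard, hF, hQ]
    exact dvd_pow (dvd_pow_self p he.ne') (by norm_num)
  haveI hcharP : CharP F p := by rw [hpr]; exact hring
  have hpe : s + 1 = p ^ e := hQ
  have hsub : ∀ a b : F, (a - b)^(s+1) = a^(s+1) - b^(s+1) := by
    intro a b; rw [hpe]; exact sub_pow_char_pow a b e
  have hadd : ∀ a b : F, (a + b)^(s+1) = a^(s+1) + b^(s+1) := by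
    intro a b; rw [hpe]; exact add_pow_char_pow a b p e
  have h3F : (3:F) ≠ 0 := by
    have hp3 : p ≠ 3 := by
      intro h'; apply h3; rw [hQ, h']; exact dvd_pow_self 3 he.ne'
    rw [show (3:F) = ((3:ℕ):F) by norm_num, Ne, CharP.cast_eq_zero_iff F p 3]
    intro hd; exact hp3 ((Nat.prime_dvd_prime_iff_eq hp (by norm_num)).mp hd)
  have h3Q : (3:F)^(s+1) = 3 := by
    have h' : ((1:F)+1+1)^(s+1) = 1+1+1 := by rw [hadd, hadd, one_pow]
    simpa [show ((1:F)+1+1) = 3 by norm_num] using h'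
  have hm3 : (s+1) % 3 = 1 ∨ (s+1) % 3 = 2 := by omega
  -- card facts
  have hcardF : Fintype.card F = (s+1)^2 := hF
  have hpowcard : ∀ z : F, z ^ ((s+1)^2) = z := by
    intro z; rw [← hcardF]; exact FiniteField.pow_card z
  have hunits : Fintype.card Fˣ = (s+1)^2 - 1 := by
    rw [Fintype.card_units, hcardF]
  have hsdvd : s ∣ (s+1)^2 - 1 := by
    have h' : (s+1)^2 = s*(s+2)+1 := by ring
    exact ⟨s+2, by omega⟩
  -- the cube root of unity
  haveI f3 : Fact (Nat.Prime 3) := ⟨by norm_num⟩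
  have h3card : 3 ∣ Fintype.card Fˣ := by
    rw [hunits]
    have hsq : ((s+1)^2) % 3 = 1 := by
      rw [Nat.pow_mod]; rcases hm3 with h' | h' <;> rw [h'] <;> norm_num
    obtain ⟨M, hM⟩ : ∃ M, (s+1)^2 = M := ⟨_, rfl⟩
    rw [hM] at hsq ⊢; omega
  obtain ⟨ω0, hω0⟩ := exists_prime_orderOf_dvd_card (G := Fˣ) 3 h3card
  have hω3 : ((ω0 : F))^3 = 1 := by
    have h' := pow_orderOf_eq_one ω0
    rw [hω0] at h'
    have := congrArg (Units.val) h'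
    push_cast at this
    exact this
  have hωne1 : ((ω0 : F)) ≠ 1 := by
    intro h'
    have : ω0 = 1 := Units.ext h'
    rw [this, orderOf_one] at hω0
    norm_num at hω0
  have hω : ((ω0 : F))^2 + (ω0 : F) + 1 = 0 := by
    have h9 : ((ω0:F) - 1)*(((ω0:F))^2 + (ω0:F) + 1) = 0 := by linear_combination hω3
    rcases mul_eq_zero.mp h9 with h' | h'
    · exact absurd (by linear_combination h' : (ω0:F) = 1) hωne1
    · exact h'
  -- value lemma
  have hval : ∀ z : F, z ^ (k*(s+1+1)+3) + 3*z^(k*(s+1+1)+(s+1)+2) - z^(k*(s+1+1)+3*(s+1))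
      = z^(k*(s+1+1)+3) * (1 + 3*(z^s) - (z^s)^3) := by
    intro z
    rw [show k*(s+1+1)+(s+1)+2 = (k*(s+1+1)+3) + s by ring,
        show k*(s+1+1)+3*(s+1) = (k*(s+1+1)+3) + s*3 by ring,
        pow_add, pow_add, pow_mul]
    ring
  have hXmu : ∀ z : F, z ≠ 0 → (z^s)^(s+2) = 1 := by
    intro z hz
    have h1 : (z^s)^(s+2) * z = z := by
      calc (z^s)^(s+2) * z = z^(s*(s+2)) * z := by rw [← pow_mul]
        _ = z^(s*(s+2)+1) := (pow_succ z _).symm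
        _ = z^((s+1)^2) := by rw [show s*(s+2)+1 = (s+1)^2 from by ring]
        _ = z := hpowcard z
    exact mul_right_cancel₀ hz (by rw [h1, one_mul])
  have hDne : ∀ z : F, z ≠ 0 → 1 + 3*(z^s) - (z^s)^3 ≠ 0 :=
    fun z hz => stmt9_Dne h3F hsub hadd h3Q (hXmu z hz)
  constructor
  · -- bijective → gcd = 1
    intro hbij
    by_contra hgcd
    have hd2 : 2 ≤ Nat.gcd (2*k+3) s := by
      have h0 : Nat.gcd (2*k+3) s ≠ 0 := by
        intro h0; have := Nat.eq_zero_of_gcd_eq_zero_left h0; omega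
      omega
    obtain ⟨l, hlp, hld⟩ := Nat.exists_prime_and_dvd (n := Nat.gcd (2*k+3) s) (by omega)
    haveI : Fact l.Prime := ⟨hlp⟩
    have hls : l ∣ s := hld.trans (Nat.gcd_dvd_right _ _)
    have hlk : l ∣ 2*k+3 := hld.trans (Nat.gcd_dvd_left _ _)
    have hlcard : l ∣ Fintype.card Fˣ := by rw [hunits]; exact hls.trans hsdvd
    obtain ⟨ζ0, hζ0⟩ := exists_prime_orderOf_dvd_card (G := Fˣ) l hlcard
    have hζs : ((ζ0 : F))^s = 1 := by
      have h' : ζ0 ^ s = 1 := orderOf_dvd_iff_pow_eq_one.mp (by rw [hζ0]; exact hls)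
      have := congrArg (Units.val) h'
      push_cast at this; exact this
    have hζk : ((ζ0 : F))^(2*k+3) = 1 := by
      have h' : ζ0 ^ (2*k+3) = 1 := orderOf_dvd_iff_pow_eq_one.mp (by rw [hζ0]; exact hlk)
      have := congrArg (Units.val) h'
      push_cast at this; exact this
    have hζne1 : ((ζ0 : F)) ≠ 1 := by
      intro h'
      have : ζ0 = 1 := Units.ext h'
      rw [this, orderOf_one] at hζ0
      exact hlp.one_lt.ne' hζ0.symm
    have hgen : ∀ m : ℕ, ((ζ0:F))^(s*m + (2*k+3)) = 1 := by
      intro m; rw [pow_add, pow_mul, hζs, one_pow, one_mul, hζk]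
    have hval1 : ((ζ0:F))^(k*(s+1+1)+3) + 3*((ζ0:F))^(k*(s+1+1)+(s+1)+2)
        - ((ζ0:F))^(k*(s+1+1)+3*(s+1))
        = (1:F)^(k*(s+1+1)+3) + 3*(1:F)^(k*(s+1+1)+(s+1)+2) - (1:F)^(k*(s+1+1)+3*(s+1)) := by
      rw [show k*(s+1+1)+3 = s*k + (2*k+3) by ring,
          show k*(s+1+1)+(s+1)+2 = s*(k+1) + (2*k+3) by ring,
          show k*(s+1+1)+3*(s+1) = s*(k+3) + (2*k+3) by ring,
          hgen k, hgen (k+1), hgen (k+3)]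
      norm_num
    exact hζne1 (hbij.injective hval1)
  · -- gcd = 1 → bijective
    intro hgcd
    apply Finite.injective_iff_bijective.mp
    intro x y hxy
    simp only at hxy
    have e1 : k*(s+1+1)+3 ≠ 0 := by
      intro hh; rcases Nat.add_eq_zero.mp hh with ⟨-, h'⟩; omega
    have e2 : k*(s+1+1)+(s+1)+2 ≠ 0 := by
      intro hh; rcases Nat.add_eq_zero.mp hh with ⟨-, h'⟩; omega
    have e3 : k*(s+1+1)+3*(s+1) ≠ 0 := by
      intro hh; rcases Nat.add_eq_zero.mp hh with ⟨-, h'⟩; omega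
    by_cases hx0 : x = 0
    · by_cases hy0 : y = 0
      · rw [hx0, hy0]
      · exfalso
        rw [hx0, zero_pow e1, zero_pow e2, zero_pow e3, hval y] at hxy
        have : (0:F) = y^(k*(s+1+1)+3) * (1 + 3*(y^s) - (y^s)^3) := by
          rw [← hxy]; ring
        exact (mul_ne_zero (pow_ne_zero _ hy0) (hDne y hy0)) this.symm
    · by_cases hy0 : y = 0
      · exfalso
        rw [hy0, zero_pow e1, zero_pow e2, zero_pow e3, hval x] at hxy
        have : (0:F) = x^(k*(s+1+1)+3) * (1 + 3*(x^s) - (x^s)^3) := by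
          rw [hxy]; ring
        exact (mul_ne_zero (pow_ne_zero _ hx0) (hDne x hx0)) this.symm
      · -- main case
        rw [hval x, hval y] at hxy
        have hX := hXmu x hx0
        have hY := hXmu y hy0
        have hXs0 : x^s ≠ 0 := pow_ne_zero _ hx0
        have hYs0 : y^s ≠ 0 := pow_ne_zero _ hy0
        have hxr0 : x^(k*(s+1+1)+3) ≠ 0 := pow_ne_zero _ hx0
        have hyr0 : y^(k*(s+1+1)+3) ≠ 0 := pow_ne_zero _ hy0
        have hfD : ∀ z : F, (1 + 3*z - z^3)^(s+1) = 1 + 3*z^(s+1) - (z^(s+1))^3 := by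
          intro z
          rw [hsub, hadd, one_pow, mul_pow, h3Q, pow_right_comm]
        have hxrs : ∀ z : F, z ≠ 0 →
            z^((k*(s+1+1)+3)*(s+1)) = (z^s)^3 * z^(k*(s+1+1)+3) := by
          intro z hz
          calc z^((k*(s+1+1)+3)*(s+1))
              = z^(s*(s+2)*k + (s*3 + (k*(s+1+1)+3))) := by
                rw [show (k*(s+1+1)+3)*(s+1) = s*(s+2)*k + (s*3 + (k*(s+1+1)+3)) by ring]
            _ = z^(s*(s+2)*k) * (z^(s*3) * z^(k*(s+1+1)+3)) := by rw [pow_add, pow_add]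
            _ = ((z^s)^(s+2))^k * ((z^s)^3 * z^(k*(s+1+1)+3)) := by
                rw [pow_mul z (s*(s+2)) k, pow_mul z s (s+2), pow_mul z s 3]
            _ = (z^s)^3 * z^(k*(s+1+1)+3) := by rw [hXmu z hz, one_pow, one_mul]
        have hXinv : (x^s)^(s+1) = (x^s)⁻¹ :=
          eq_inv_of_mul_eq_one_left (by rw [← pow_succ]; exact hX)
        have hYinv : (y^s)^(s+1) = (y^s)⁻¹ :=
          eq_inv_of_mul_eq_one_left (by rw [← pow_succ]; exact hY)
        have h2 : (x^s)^3 * x^(k*(s+1+1)+3) * (1 + 3*(x^s)⁻¹ - ((x^s)⁻¹)^3)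
            = (y^s)^3 * y^(k*(s+1+1)+3) * (1 + 3*(y^s)⁻¹ - ((y^s)⁻¹)^3) := by
          have h' := congrArg (· ^ (s+1)) hxy
          rw [mul_pow, mul_pow, hfD, hfD, ← pow_mul x (k*(s+1+1)+3) (s+1),
            ← pow_mul y (k*(s+1+1)+3) (s+1),
            hxrs x hx0, hxrs y hy0, hXinv, hYinv] at h'
          linear_combination h'
        have hsimp : ∀ A : F, A ≠ 0 → A^3 * (1 + 3*A⁻¹ - (A⁻¹)^3) = A^3 + 3*A^2 - 1 := by
          intro A hA; field_simp
        have h4 : x^(k*(s+1+1)+3) * ((x^s)^3 + 3*(x^s)^2 - 1)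
            = y^(k*(s+1+1)+3) * ((y^s)^3 + 3*(y^s)^2 - 1) := by
          have ea := hsimp (x^s) hXs0
          have eb := hsimp (y^s) hYs0
          linear_combination h2 - x^(k*(s+1+1)+3) * ea + y^(k*(s+1+1)+3) * eb
        have h5 : ((x^s)^3 + 3*(x^s)^2 - 1) * (1 + 3*(y^s) - (y^s)^3)
            = ((y^s)^3 + 3*(y^s)^2 - 1) * (1 + 3*(x^s) - (x^s)^3) := by
          apply mul_left_cancel₀ (mul_ne_zero hxr0 hyr0)
          calc (x^(k*(s+1+1)+3) * y^(k*(s+1+1)+3)) * (((x^s)^3 + 3*(x^s)^2 - 1) * (1 + 3*(y^s) - (y^s)^3))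
              = (x^(k*(s+1+1)+3) * ((x^s)^3 + 3*(x^s)^2 - 1)) * (y^(k*(s+1+1)+3) * (1 + 3*(y^s) - (y^s)^3)) := by ring
            _ = (y^(k*(s+1+1)+3) * ((y^s)^3 + 3*(y^s)^2 - 1)) * (x^(k*(s+1+1)+3) * (1 + 3*(x^s) - (x^s)^3)) := by
                rw [h4, ← hxy]
            _ = (x^(k*(s+1+1)+3) * y^(k*(s+1+1)+3)) * (((y^s)^3 + 3*(y^s)^2 - 1) * (1 + 3*(x^s) - (x^s)^3)) := by ring
        have hXY : x^s = y^s := stmt9_core hω h3F hsub hm3 hX hY h5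
        rw [hXY] at hxy
        have hxr : x^(k*(s+1+1)+3) = y^(k*(s+1+1)+3) :=
          mul_right_cancel₀ (hDne y hy0) hxy
        have hζr : (x*y⁻¹)^(k*(s+1+1)+3) = 1 := by
          rw [mul_pow, inv_pow, hxr, mul_inv_cancel₀ (pow_ne_zero _ hy0)]
        have hζs : (x*y⁻¹)^s = 1 := by
          rw [mul_pow, inv_pow, hXY, mul_inv_cancel₀ (pow_ne_zero _ hy0)]
        have hdvd : orderOf (x*y⁻¹) ∣ Nat.gcd (k*(s+1+1)+3) s :=
          Nat.dvd_gcd (orderOf_dvd_of_pow_eq_one hζr) (orderOf_dvd_of_pow_eq_one hζs)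
        have hg : Nat.gcd (k*(s+1+1)+3) s = 1 := by
          rw [show k*(s+1+1)+3 = 2*k+3 + k*s by ring, Nat.gcd_comm,
            Nat.gcd_add_mul_right_right s (2*k+3) k, Nat.gcd_comm]
          exact hgcd
        rw [hg, Nat.dvd_one] at hdvd
        have : x*y⁻¹ = 1 := orderOf_eq_one_iff.mp hdvd
        exact (mul_inv_eq_one₀ hy0).mp this
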